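/- Let P = F ⊕ L with F a rooted forest and L a ladder, Q an upset of P. Then P \ Q is again of the form F' ⊕ L' for a rooted forest F' and a (possibly empty) ladder L'. Moreover, if L' ≠ ∅ then P \ Q has at most two maximal elements, and if L' = ∅ then for every element i of P \ Q, the set {j ∈ P\Q : i ⪯ j} is a chain. -/

import Mathlib

open Matrix Kronecker
open scoped Classical

namespace PromoMC

/-- A listing of the elements of a finite set `α`. -/
abbrev Listing (α : Type*) [Fintype α] := Fin (Fintype.card α) ≃ α

/-- `π` is a linear extension of the poset `α`: `π i < π j` in `α` implies `i < j`. -/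
def IsLinExt {α : Type*} [Fintype α] [PartialOrder α] (π : Listing α) : Prop :=
  ∀ i j, π i < π j → i < j

variable {α : Type*} [Fintype α] [PartialOrder α]

/-- The operator `τ_i`: swap positions `i` and `i+1` (0-indexed) of a listing when
the corresponding entries are incomparable. -/
noncomputable def tau (i : ℕ) (π : Listing α) : Listing α :=
  if h : i + 1 < Fintype.card α then
    if ¬ π ⟨i, by omega⟩ ≤ π ⟨i + 1, h⟩ ∧ ¬ π ⟨i + 1, h⟩ ≤ π ⟨i, by omega⟩ then
      (Equiv.swap (⟨i, by omega⟩ : Fin (Fintype.card α)) ⟨i + 1, h⟩).trans π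
    else π
  else π

/-- The extended promotion operator `∂_i = τ_{n-1} ⋯ τ_{i+1} τ_i` (0-indexed). -/
noncomputable def promo (i : ℕ) (π : Listing α) : Listing α :=
  ((List.range (Fintype.card α)).drop i).foldl (fun σ j => tau j σ) π

/-- The set of linear extensions of a finite poset. -/
def LinExt (α : Type*) [Fintype α] [PartialOrder α] := {π : Listing α // IsLinExt π}

noncomputable instance : Fintype (LinExt α) := by unfold LinExt; infer_instance

noncomputable instance : DecidableEq (LinExt α) := Classical.decEq _

/-- The transition matrix of the promotion Markov chain: the `(π, π')` entry is the
sum of `x (π i)` over all positions `i` with `∂_i π = π'`. -/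
noncomputable def promoMatrix (x : α → ℝ) : Matrix (LinExt α) (LinExt α) ℝ :=
  fun π π' => ∑ i : Fin (Fintype.card α), if promo (i : ℕ) π.1 = π'.1 then x (π.1 i) else 0

/-- A discrete (antichain) order on a type. -/
def Discrete (β : Type*) := β

instance {β : Type*} : PartialOrder (Discrete β) where
  le a b := a = b
  le_refl _ := rfl
  le_trans _ _ _ h h' := Eq.trans h h'
  le_antisymm _ _ h _ := h

instance {β : Type*} [Fintype β] : Fintype (Discrete β) := inferInstanceAs (Fintype β)
instance {β : Type*} [DecidableEq β] : DecidableEq (Discrete β) := inferInstanceAs (DecidableEq β)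

instance {β γ : Type*} [Fintype β] [Fintype γ] : Fintype (β ⊕ₗ γ) :=
  inferInstanceAs (Fintype (β ⊕ γ))

/-- A ladder with `k` levels, the `i`-th level an antichain of size `(q i) + 1 ∈ {1, 2}`. -/
def Ladder (k : ℕ) (q : Fin k → Fin 2) := Σ i : Fin k, Fin ((q i : ℕ) + 1)

instance {k : ℕ} {q : Fin k → Fin 2} : Fintype (Ladder k q) :=
  inferInstanceAs (Fintype (Σ i : Fin k, Fin ((q i : ℕ) + 1)))

instance {k : ℕ} {q : Fin k → Fin 2} : DecidableEq (Ladder k q) :=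
  inferInstanceAs (DecidableEq (Σ i : Fin k, Fin ((q i : ℕ) + 1)))

instance {k : ℕ} {q : Fin k → Fin 2} : PartialOrder (Ladder k q) where
  le a b := a.1 < b.1 ∨ a = b
  le_refl _ := Or.inr rfl
  le_trans := by
    rintro a b c (h | rfl) (h' | rfl)
    · exact Or.inl (h.trans h')
    · exact Or.inl h
    · exact Or.inl h'
    · exact Or.inr rfl
  le_antisymm := by
    rintro a b (h | rfl) (h' | h2)
    · exact ((lt_asymm h) h').elim
    · exact h2.symm
    · rfl
    · rfl

/-- A rooted forest: every element is covered by at most one element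
(has at most one successor). -/
def IsRootedForest (α : Type*) [PartialOrder α] : Prop :=
  ∀ a b c : α, a ⋖ b → a ⋖ c → b = c

/-- A finite poset is a ladder if it is order-isomorphic to some `Ladder k q`. -/
def IsLadder (α : Type*) [Fintype α] [PartialOrder α] : Prop :=
  ∃ (k : ℕ) (q : Fin k → Fin 2), Nonempty (α ≃o Ladder k q)


/-! ### Auxiliary lemmas -/

lemma natRange_aux (s : Finset ℕ) (h : ∀ a ∈ s, ∀ b, b ≤ a → b ∈ s) :
    s = Finset.range s.card := by
  have hsub : Finset.range s.card ⊆ s := by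
    intro b hb
    rw [Finset.mem_range] at hb
    by_contra hbs
    have hss : s ⊆ Finset.range b := by
      intro a ha
      rw [Finset.mem_range]
      by_contra hab
      exact hbs (h a ha b (by omega))
    have := Finset.card_le_card hss
    simp [Finset.card_range] at this
    omega
  exact (Finset.eq_of_subset_of_card_le hsub (by simp)).symm

lemma forest_comp_aux {β : Type*} [Fintype β] [PartialOrder β] (hF : IsRootedForest β) :
    ∀ (n : ℕ) (i j j' : β), (Set.toFinset {x | i < x}).card ≤ n → i ≤ j → i ≤ j' →
      j ≤ j' ∨ j' ≤ j := by
  intro n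
  induction n with
  | zero =>
    intro i j j' hc hij hij'
    have hno : ∀ x, ¬ i < x := by
      intro x hx
      have hx' : x ∈ Set.toFinset {x | i < x} := by simp [hx]
      have := Finset.card_pos.mpr ⟨x, hx'⟩
      omega
    rcases eq_or_lt_of_le hij with rfl | h
    · exact Or.inl hij'
    · exact absurd h (hno j)
  | succ n ih =>
    intro i j j' hc hij hij'
    rcases eq_or_lt_of_le hij with rfl | h
    · exact Or.inl hij'
    rcases eq_or_lt_of_le hij' with rfl | h'
    · exact Or.inr hij
    obtain ⟨c, hcov, hcj⟩ := exists_covBy_le_of_lt h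
    obtain ⟨c', hcov', hcj'⟩ := exists_covBy_le_of_lt h'
    have hcc : c = c' := hF i c c' hcov hcov'
    subst hcc
    apply ih c j j' ?_ hcj hcj'
    have hsub : Set.toFinset {x | c < x} ⊂ Set.toFinset {x | i < x} := by
      rw [Finset.ssubset_iff_of_subset]
      · exact ⟨c, by simp [hcov.lt], by simp⟩
      · intro x hx
        simp only [Set.mem_toFinset, Set.mem_setOf_eq] at *
        exact hcov.lt.trans hx
    have := Finset.card_lt_card hsub
    omega

lemma forest_chain_aux {β : Type*} [Fintype β] [PartialOrder β] (hF : IsRootedForest β)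
    (i j j' : β) (hij : i ≤ j) (hij' : i ≤ j') : j ≤ j' ∨ j' ≤ j :=
  forest_comp_aux hF _ i j j' le_rfl hij hij'

lemma forest_subset_aux {β : Type*} [PartialOrder β] (hF : IsRootedForest β) (S : Set β)
    (hS : ∀ a b : β, a ≤ b → b ∈ S → a ∈ S) : IsRootedForest {x : β // x ∈ S} := by
  have hcov : ∀ a b : {x : β // x ∈ S}, a ⋖ b → a.1 ⋖ b.1 := by
    intro a b hab
    refine ⟨Subtype.coe_lt_coe.mpr hab.lt, ?_⟩
    intro x hax hxb
    have hx : x ∈ S := hS x b.1 hxb.le b.2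
    exact hab.2 (show a < ⟨x, hx⟩ from Subtype.mk_lt_mk.mpr hax) (Subtype.mk_lt_mk.mpr hxb)
  intro a b c hab hac
  exact Subtype.ext (hF a.1 b.1 c.1 (hcov a b hab) (hcov a c hac))

lemma ladder_le_def' {k : ℕ} {q : Fin k → Fin 2} (a b : Ladder k q) :
    a ≤ b ↔ a.1 < b.1 ∨ a = b := Iff.rfl

lemma isLadder_downset_aux {k : ℕ} {q : Fin k → Fin 2} (T : Set (Ladder k q))
    (hT : ∀ a b : Ladder k q, a ≤ b → b ∈ T → a ∈ T) :
    IsLadder {y : Ladder k q // y ∈ T} := by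
  classical
  set I : Finset (Fin k) := Finset.univ.filter (fun i => ∃ a, (⟨i, a⟩ : Ladder k q) ∈ T) with hI
  set m := I.card with hm
  have H1 : ∀ i i' : Fin k, i ≤ i' → i' ∈ I → i ∈ I := by
    intro i i' hle hi'
    rcases eq_or_lt_of_le hle with rfl | hlt
    · exact hi'
    · simp only [hI, Finset.mem_filter, Finset.mem_univ, true_and] at hi' ⊢
      obtain ⟨a', ha'⟩ := hi'
      exact ⟨0, hT ⟨i, 0⟩ ⟨i', a'⟩ (Or.inl hlt) ha'⟩
  have H2 : ∀ i : Fin k, i ∈ I ↔ (i : ℕ) < m := by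
    have himg : I.image Fin.val = Finset.range m := by
      have := natRange_aux (I.image Fin.val) ?_
      · rwa [Finset.card_image_of_injective _ Fin.val_injective, ← hm] at this
      · intro a ha b hba
        simp only [Finset.mem_image] at ha ⊢
        obtain ⟨j, hj, rfl⟩ := ha
        exact ⟨⟨b, lt_of_le_of_lt hba j.2⟩, H1 _ j hba hj, rfl⟩
    intro i
    constructor
    · intro hi
      have : (i : ℕ) ∈ I.image Fin.val := Finset.mem_image_of_mem _ hi
      rw [himg, Finset.mem_range] at this
      exact this
    · intro hi
      have : (i : ℕ) ∈ I.image Fin.val := by rw [himg, Finset.mem_range]; exact hi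
      simp only [Finset.mem_image] at this
      obtain ⟨j, hj, hji⟩ := this
      rwa [show i = j from Fin.val_injective hji.symm]
  have hmk : m ≤ k := by
    calc m ≤ Finset.univ.card := Finset.card_le_card (Finset.filter_subset _ _)
    _ = k := by simp
  set c : Fin k → ℕ :=
    fun i => Fintype.card {a : Fin ((q i : ℕ) + 1) // (⟨i, a⟩ : Ladder k q) ∈ T} with hc
  have H4 : ∀ i : Fin k, i ∈ I → 1 ≤ c i := by
    intro i hi
    simp only [hI, Finset.mem_filter, Finset.mem_univ, true_and] at hi
    obtain ⟨a, ha⟩ := hi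
    exact Fintype.card_pos_iff.mpr ⟨⟨a, ha⟩⟩
  have H5 : ∀ i : Fin k, c i ≤ (q i : ℕ) + 1 := by
    intro i
    simpa using
      Fintype.card_subtype_le (fun a : Fin ((q i : ℕ) + 1) => (⟨i, a⟩ : Ladder k q) ∈ T)
  set ι : Fin m → Fin k := fun i => ⟨i.1, lt_of_lt_of_le i.2 hmk⟩ with hι
  have hιI : ∀ i : Fin m, ι i ∈ I := fun i => (H2 (ι i)).mpr i.2
  have hq2 : ∀ i : Fin m, c (ι i) - 1 < 2 := by
    intro i
    have h5 := H5 (ι i)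
    have : (q (ι i) : ℕ) < 2 := (q (ι i)).2
    omega
  set q'' : Fin m → Fin 2 := fun i => ⟨c (ι i) - 1, hq2 i⟩ with hq''
  have hcard : ∀ i : Fin m,
      Fintype.card {a : Fin ((q (ι i) : ℕ) + 1) // (⟨ι i, a⟩ : Ladder k q) ∈ T}
        = (q'' i : ℕ) + 1 := by
    intro i
    have h4 := H4 _ (hιI i)
    show c (ι i) = c (ι i) - 1 + 1
    omega
  have E : ∀ i : Fin m,
      {a : Fin ((q (ι i) : ℕ) + 1) // (⟨ι i, a⟩ : Ladder k q) ∈ T} ≃ Fin ((q'' i : ℕ) + 1) :=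
    fun i => Fintype.equivFinOfCardEq (hcard i)
  have hmem : ∀ y : {y : Ladder k q // y ∈ T}, (y.1.1 : ℕ) < m := by
    intro y
    refine (H2 y.1.1).mp ?_
    simp only [hI, Finset.mem_filter, Finset.mem_univ, true_and]
    exact ⟨y.1.2, y.2⟩
  let e : Ladder m q'' ≃ {y : Ladder k q // y ∈ T} :=
    { toFun := fun x => ⟨⟨ι x.1, ((E x.1).symm x.2).1⟩, ((E x.1).symm x.2).2⟩
      invFun := fun y => ⟨⟨(y.1.1 : ℕ), hmem y⟩, E ⟨(y.1.1 : ℕ), hmem y⟩ ⟨y.1.2, y.2⟩⟩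
      left_inv := by
        intro x
        obtain ⟨i, a⟩ := x
        exact Sigma.ext rfl (heq_of_eq (Equiv.apply_symm_apply _ a))
      right_inv := by
        intro y
        obtain ⟨⟨i, a⟩, h⟩ := y
        exact Subtype.ext (Sigma.ext rfl
          (heq_of_eq (congrArg Subtype.val (Equiv.symm_apply_apply _ _)))) }
  refine ⟨m, q'', ⟨(OrderIso.symm ⟨e, ?_⟩)⟩⟩
  intro x y
  show e x ≤ e y ↔ (x.1 < y.1 ∨ x = y)
  rw [← Subtype.coe_le_coe, ladder_le_def']
  constructor
  · rintro (h | h)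
    · exact Or.inl h
    · exact Or.inr (e.injective (Subtype.ext h))
  · rintro (h | rfl)
    · exact Or.inl h
    · exact Or.inr rfl

lemma isLadder_subset_aux {β : Type*} [Fintype β] [PartialOrder β] (hL : IsLadder β)
    (S : Set β) (hS : ∀ a b : β, a ≤ b → b ∈ S → a ∈ S) :
    IsLadder {x : β // x ∈ S} := by
  obtain ⟨k, q, ⟨e⟩⟩ := hL
  set T : Set (Ladder k q) := {y | e.symm y ∈ S} with hTdef
  have hT : ∀ a b : Ladder k q, a ≤ b → b ∈ T → a ∈ T := by
    intro a b hab hb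
    exact hS _ _ (e.symm.monotone hab) hb
  obtain ⟨k', q', ⟨e2⟩⟩ := isLadder_downset_aux T hT
  refine ⟨k', q', ⟨OrderIso.trans ?_ e2⟩⟩
  refine ⟨Equiv.subtypeEquiv e.toEquiv ?_, ?_⟩
  · intro x
    simp [hTdef]
  · intro x y
    simp [Equiv.subtypeEquiv, Subtype.mk_le_mk, ← Subtype.coe_le_coe]

/-- Let `P = F ⊕ L` with `F` a rooted forest and `L` a ladder,
and let `Q` be an upset of `P`.  Then `P \ Q` is again of the form `F' ⊕ L'` with
`F'` a rooted forest and `L'` a (possibly empty) ladder; moreover if `L' ≠ ∅`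
then `P \ Q` has at most two maximal elements, and if `L' = ∅` then for every
`i ∈ P \ Q` the set `{j ∈ P \ Q : i ⪯ j}` is a chain. -/
theorem stmt12 (F L : Type) [Fintype F] [PartialOrder F] [Fintype L] [PartialOrder L]
    (hF : IsRootedForest F) (hL : IsLadder L)
    (Q : Set (F ⊕ₗ L)) (hQ : ∀ a b : F ⊕ₗ L, a ∈ Q → a ≤ b → b ∈ Q) :
    ∃ (F' : Type) (iF : PartialOrder F') (jF : Fintype F')
      (k' : ℕ) (q' : Fin k' → Fin 2),
      haveI := iF
      haveI := jF
      IsRootedForest F' ∧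
      Nonempty ({p : F ⊕ₗ L // p ∉ Q} ≃o (F' ⊕ₗ Ladder k' q')) ∧
      (k' ≠ 0 → Nat.card {s : {p : F ⊕ₗ L // p ∉ Q} // IsMax s} ≤ 2) ∧
      (k' = 0 → ∀ i : {p : F ⊕ₗ L // p ∉ Q}, IsChain (· ≤ ·) {j | i ≤ j}) := by
  classical
  set SF : Set F := {f | (toLex (Sum.inl f) : F ⊕ₗ L) ∉ Q} with hSFdef
  set SL : Set L := {l | (toLex (Sum.inr l) : F ⊕ₗ L) ∉ Q} with hSLdef
  have hSF : ∀ a b : F, a ≤ b → b ∈ SF → a ∈ SF := by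
    intro a b hab hb ha
    exact hb (hQ _ _ ha (Sum.Lex.inl_le_inl_iff.mpr hab))
  have hSL : ∀ a b : L, a ≤ b → b ∈ SL → a ∈ SL := by
    intro a b hab hb ha
    exact hb (hQ _ _ ha (Sum.Lex.inr_le_inr_iff.mpr hab))
  obtain ⟨k', q', ⟨eL⟩⟩ := isLadder_subset_aux hL SL hSL
  have hforest : IsRootedForest {f : F // f ∈ SF} := forest_subset_aux hF SF hSF
  -- the main order isomorphism
  let fwd : {p : F ⊕ₗ L // p ∉ Q} → ({f : F // f ∈ SF} ⊕ₗ Ladder k' q') := fun p =>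
    Sum.rec (motive := fun s => (toLex s : F ⊕ₗ L) ∉ Q → ({f : F // f ∈ SF} ⊕ₗ Ladder k' q'))
      (fun f hf => toLex (Sum.inl ⟨f, hf⟩))
      (fun l hl => toLex (Sum.inr (eL ⟨l, hl⟩))) (ofLex p.1) p.2
  let bwd : ({f : F // f ∈ SF} ⊕ₗ Ladder k' q') → {p : F ⊕ₗ L // p ∉ Q} := fun x =>
    Sum.rec (motive := fun _ => {p : F ⊕ₗ L // p ∉ Q})
      (fun f => ⟨toLex (Sum.inl f.1), f.2⟩)
      (fun y => ⟨toLex (Sum.inr (eL.symm y).1), (eL.symm y).2⟩) (ofLex x)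
  let iso : {p : F ⊕ₗ L // p ∉ Q} ≃o ({f : F // f ∈ SF} ⊕ₗ Ladder k' q') :=
    { toFun := fwd
      invFun := bwd
      left_inv := by
        rintro ⟨p, hp⟩
        obtain f | l := p
        · rfl
        · exact Subtype.ext
            (congrArg (fun z : {l : L // l ∈ SL} => (toLex (Sum.inr z.1) : F ⊕ₗ L))
              (eL.symm_apply_apply ⟨l, hp⟩))
      right_inv := by
        intro x
        obtain f | y := x
        · rfl
        · exact congrArg (fun z : Ladder k' q' => (toLex (Sum.inr z) : _ ⊕ₗ _))
            (eL.apply_symm_apply y)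
      map_rel_iff' := by
        rintro ⟨a, ha⟩ ⟨b, hb⟩
        obtain f | l := a <;> obtain g | l' := b
        · show toLex (Sum.inl _) ≤ toLex (Sum.inl _) ↔ _
          rw [Sum.Lex.inl_le_inl_iff]
          show f ≤ g ↔ (toLex (Sum.inl f) : F ⊕ₗ L) ≤ toLex (Sum.inl g)
          exact Sum.Lex.inl_le_inl_iff.symm
        · show toLex (Sum.inl _) ≤ toLex (Sum.inr _) ↔ _
          exact iff_of_true (Sum.Lex.inl_le_inr _ _) (Sum.Lex.inl_le_inr _ _)
        · show toLex (Sum.inr _) ≤ toLex (Sum.inl _) ↔ _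
          exact iff_of_false Sum.Lex.not_inr_le_inl Sum.Lex.not_inr_le_inl
        · show toLex (Sum.inr _) ≤ toLex (Sum.inr _) ↔ _
          rw [Sum.Lex.inr_le_inr_iff, eL.le_iff_le]
          show l ≤ l' ↔ (toLex (Sum.inr l) : F ⊕ₗ L) ≤ toLex (Sum.inr l')
          exact Sum.Lex.inr_le_inr_iff.symm }
  refine ⟨{f : F // f ∈ SF}, inferInstance, inferInstance, k', q', hforest, ⟨iso⟩, ?_, ?_⟩
  · -- at most two maximal elements
    intro hk'
    have hk : 0 < k' := Nat.pos_of_ne_zero hk'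
    set X := ({f : F // f ∈ SF} ⊕ₗ Ladder k' q') with hXdef
    let y0 : Ladder k' q' := ⟨⟨0, hk⟩, ⟨0, Nat.succ_pos _⟩⟩
    have hmax_inr : ∀ x : X, IsMax x → ∃ y : Ladder k' q', x = toLex (Sum.inr y) := by
      intro x hx
      obtain f | y := x
      · exact absurd (hx (Sum.Lex.inl_le_inr f y0)) Sum.Lex.not_inr_le_inl
      · exact ⟨y, rfl⟩
    let g : X → Fin 2 := fun x =>
      Sum.rec (motive := fun _ => Fin 2) (fun _ => 0)
        (fun y => ⟨y.2.1, by have h1 := y.2.2; have h2 := (q' y.1).2; omega⟩) (ofLex x)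
    have key : ∀ ya yb : Ladder k' q', IsMax (toLex (Sum.inr ya) : X) → ya.1 < yb.1 → False := by
      intro ya yb hmax hlt
      have h1 : (toLex (Sum.inr ya) : X) ≤ toLex (Sum.inr yb) :=
        Sum.Lex.inr_le_inr_iff.mpr (Or.inl hlt)
      have h2 : yb ≤ ya := Sum.Lex.inr_le_inr_iff.mp (hmax h1)
      rcases h2 with h2 | rfl
      · exact absurd hlt (lt_asymm h2)
      · exact absurd hlt (lt_irrefl _)
    have ginj : ∀ x1 x2 : X, IsMax x1 → IsMax x2 → g x1 = g x2 → x1 = x2 := by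
      intro x1 x2 hm1 hm2 hg
      obtain ⟨y1, rfl⟩ := hmax_inr x1 hm1
      obtain ⟨y2, rfl⟩ := hmax_inr x2 hm2
      have hfst : y1.1 = y2.1 := by
        rcases lt_trichotomy y1.1 y2.1 with h | h | h
        · exact absurd (key y1 y2 hm1 h) not_false
        · exact h
        · exact absurd (key y2 y1 hm2 h) not_false
      obtain ⟨i1, a1⟩ := y1
      obtain ⟨i2, a2⟩ := y2
      dsimp at hfst
      subst hfst
      have hg' : Fin.val (g (toLex (Sum.inr (⟨i1, a1⟩ : Ladder k' q'))))
          = Fin.val (g (toLex (Sum.inr (⟨i1, a2⟩ : Ladder k' q')))) :=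
        congrArg Fin.val hg
      have hval : a1.1 = a2.1 := hg'
      exact congrArg (fun a => toLex (Sum.inr (⟨i1, a⟩ : Ladder k' q'))) (Fin.ext hval)
    have hinj : Function.Injective (fun s : {s : {p : F ⊕ₗ L // p ∉ Q} // IsMax s} =>
        g (iso s.1)) := by
      intro s1 s2 heq
      have m1 : IsMax (iso s1.1) := iso.isMax_apply.mpr s1.2
      have m2 : IsMax (iso s2.1) := iso.isMax_apply.mpr s2.2
      have := ginj _ _ m1 m2 heq
      exact Subtype.ext (iso.injective this)
    have := Nat.card_le_card_of_injective _ hinj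
    simpa using this
  · -- chain condition
    intro hk0 i
    have hLQ : ∀ l : L, (toLex (Sum.inr l) : F ⊕ₗ L) ∈ Q := by
      intro l
      by_contra hl
      have := (eL ⟨l, hl⟩).1.2
      omega
    have hinl : ∀ p : {p : F ⊕ₗ L // p ∉ Q}, ∃ f : F, p.1 = toLex (Sum.inl f) := by
      rintro ⟨p, hp⟩
      obtain f | l := p
      · exact ⟨f, rfl⟩
      · exact absurd (hLQ l) hp
    intro j hj j' hj' _
    obtain ⟨fi, hfi⟩ := hinl i
    obtain ⟨fj, hfj⟩ := hinl j
    obtain ⟨fj', hfj'⟩ := hinl j'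
    have hij : fi ≤ fj := by
      have := Subtype.coe_le_coe.mpr (show i ≤ j from hj)
      rw [hfi, hfj, Sum.Lex.inl_le_inl_iff] at this
      exact this
    have hij' : fi ≤ fj' := by
      have := Subtype.coe_le_coe.mpr (show i ≤ j' from hj')
      rw [hfi, hfj', Sum.Lex.inl_le_inl_iff] at this
      exact this
    rcases forest_chain_aux hF fi fj fj' hij hij' with h | h
    · left
      show j ≤ j'
      rw [← Subtype.coe_le_coe, hfj, hfj']
      exact Sum.Lex.inl_le_inl_iff.mpr h
    · right
      show j' ≤ j
      rw [← Subtype.coe_le_coe, hfj, hfj']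
      exact Sum.Lex.inl_le_inl_iff.mpr h

end PromoMC
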